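/- For every n ≥ 1, every sequence of n constant-product pools with positive reserves (a₁,b₁), (a₂,b₂), …, (aₙ,bₙ), and fee parameters r₁, r₂ ∈ (0,1], there exist positive real virtual reserves A_v, C_v > 0 such that for every input δ ≥ 0 the n-fold composed swap output, obtained by feeding δ through pool 1, the result through pool 2, and so on through pool n, equals swap(A_v, C_v, δ). -/

import Mathlib

/-- Constant-product AMM swap: output of swapping input `δ` through a pool with
input-side reserve `a`, output-side reserve `b` and fee parameters `r1, r2`. -/
noncomputable def swap (r1 r2 a b δ : ℝ) : ℝ := r1 * r2 * b * δ / (a + r1 * δ)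

/-- Output of feeding an input through a sequence of pools; each pool is a pair
`(input-side reserve, output-side reserve)` along the direction of trade. -/
noncomputable def cyclicOut (r1 r2 : ℝ) : List (ℝ × ℝ) → ℝ → ℝ
  | [], δ => δ
  | p :: ps, δ => cyclicOut r1 r2 ps (swap r1 r2 p.1 p.2 δ)

/-- Arbitrage index of a cycle of pools: product of output-side reserves divided
by product of input-side reserves. -/
noncomputable def arbIndex (ps : List (ℝ × ℝ)) : ℝ :=
  (ps.map Prod.snd).prod / (ps.map Prod.fst).prod

/-- The reversed cycle: the same pools in opposite order with the roles of the
two reserves of each pool interchanged. -/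
def revPools (ps : List (ℝ × ℝ)) : List (ℝ × ℝ) := (ps.map Prod.swap).reverse

/-- The updated pools after executing a cyclic transaction with input `δ`:
each pool's input-side reserve increases by the amount swapped in and its
output-side reserve decreases by the amount swapped out. -/
noncomputable def execPools (r1 r2 : ℝ) : List (ℝ × ℝ) → ℝ → List (ℝ × ℝ)
  | [], _ => []
  | p :: ps, δ =>
      (p.1 + δ, p.2 - swap r1 r2 p.1 p.2 δ) :: execPools r1 r2 ps (swap r1 r2 p.1 p.2 δ)

/-- a composition of swaps through n pools equals a single swap
through a virtual pool with positive virtual reserves. -/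

lemma swap_nonneg (r1 r2 a b δ : ℝ) (hr1 : 0 < r1) (hr2 : 0 < r2)
    (ha : 0 < a) (hb : 0 < b) (hδ : 0 ≤ δ) : 0 ≤ swap r1 r2 a b δ := by
  unfold swap
  apply div_nonneg
  · positivity
  · positivity

lemma swap_comp (r1 r2 a b A B δ : ℝ) (hr1 : 0 < r1) (hr2 : 0 < r2)
    (ha : 0 < a) (hb : 0 < b) (hA : 0 < A) (hδ : 0 ≤ δ) :
    swap r1 r2 A B (swap r1 r2 a b δ)
      = swap r1 r2 (A * a / (A + r1 * r2 * b)) (r1 * r2 * B * b / (A + r1 * r2 * b)) δ := by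
  have h1 : (0:ℝ) < a + r1 * δ := by positivity
  have h2 : (0:ℝ) < A + r1 * r2 * b := by positivity
  have h3 : (0:ℝ) < A + r1 * (r1 * r2 * b * δ / (a + r1 * δ)) := by positivity
  have h4 : (0:ℝ) < A * a / (A + r1 * r2 * b) + r1 * δ := by positivity
  unfold swap
  rw [div_eq_div_iff (by positivity) (by positivity)]
  field_simp
  ring

lemma cyclic_aux (r1 r2 : ℝ) (hr1 : 0 < r1) (hr2 : 0 < r2) :
    ∀ ps : List (ℝ × ℝ), ps ≠ [] → (∀ p ∈ ps, 0 < p.1 ∧ 0 < p.2) →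
    ∃ Av Cv : ℝ, 0 < Av ∧ 0 < Cv ∧
      ∀ δ : ℝ, 0 ≤ δ → cyclicOut r1 r2 ps δ = swap r1 r2 Av Cv δ := by
  intro ps
  induction ps with
  | nil => intro h; exact absurd rfl h
  | cons p ps ih =>
    intro _ hpos
    obtain ⟨ha, hb⟩ := hpos p List.mem_cons_self
    cases ps with
    | nil =>
      refine ⟨p.1, p.2, ha, hb, fun δ hδ => ?_⟩
      simp [cyclicOut]
    | cons q rest =>
      obtain ⟨Av, Cv, hAv, hCv, hsw⟩ := ih (by simp)
        (fun x hx => hpos x (List.mem_cons_of_mem _ hx))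
      refine ⟨Av * p.1 / (Av + r1 * r2 * p.2), r1 * r2 * Cv * p.2 / (Av + r1 * r2 * p.2),
        by positivity, by positivity, fun δ hδ => ?_⟩
      have h1 : cyclicOut r1 r2 (p :: q :: rest) δ
          = cyclicOut r1 r2 (q :: rest) (swap r1 r2 p.1 p.2 δ) := rfl
      rw [h1, hsw _ (swap_nonneg r1 r2 p.1 p.2 δ hr1 hr2 ha hb hδ),
        swap_comp r1 r2 p.1 p.2 Av Cv δ hr1 hr2 ha hb hAv hδ]

theorem composed_swaps_eq_virtual_pool
    (n : ℕ) (hn : 1 ≤ n) (ps : List (ℝ × ℝ)) (hlen : ps.length = n)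
    (hpos : ∀ p ∈ ps, 0 < p.1 ∧ 0 < p.2)
    (r1 r2 : ℝ) (hr1 : 0 < r1) (hr1' : r1 ≤ 1) (hr2 : 0 < r2) (hr2' : r2 ≤ 1) :
    ∃ Av Cv : ℝ, 0 < Av ∧ 0 < Cv ∧
      ∀ δ : ℝ, 0 ≤ δ → cyclicOut r1 r2 ps δ = swap r1 r2 Av Cv δ := by
  have hne : ps ≠ [] := by
    intro h; rw [h] at hlen; simp at hlen; omega
  exact cyclic_aux r1 r2 hr1 hr2 ps hne hpos
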